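/- Gamma quotient infinite product formula: for complex numbers A, B, C with A, B, A+C, B−C avoiding the nonpositive integers, Γ(A)Γ(B)/(Γ(A+C)Γ(B−C)) = ∏_{s=0}^∞ (1 + C/(A+s))·(1 − C/(B+s)). -/

import Mathlib

open Complex Filter Finset Asymptotics Topology

theorem gamma_quotient_infinite_product (A B C : ℂ)
    (hA : ∀ n : ℕ, A ≠ -n) (hB : ∀ n : ℕ, B ≠ -n)
    (hAC : ∀ n : ℕ, A + C ≠ -n) (hBC : ∀ n : ℕ, B - C ≠ -n) :
    Complex.Gamma A * Complex.Gamma B / (Complex.Gamma (A + C) * Complex.Gamma (B - C))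
      = ∏' s : ℕ, (1 + C / (A + s)) * (1 - C / (B + s)) := by
  have key : ∀ z : ℂ, (∀ n : ℕ, z ≠ -n) → ∀ s : ℕ, z + s ≠ 0 := by
    intro z hz s h
    exact hz s (by linear_combination h)
  set f : ℕ → ℂ := fun s => (1 + C / (A + s)) * (1 - C / (B + s)) with hfdef
  have hA0 : ∀ s : ℕ, A + s ≠ 0 := key A hA
  have hB0 : ∀ s : ℕ, B + s ≠ 0 := key B hB
  have hAC0 : ∀ s : ℕ, A + C + s ≠ 0 := key (A + C) hAC
  have hBC0 : ∀ s : ℕ, B - C + s ≠ 0 := key (B - C) hBC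
  have hfeq : ∀ s : ℕ, f s = ((A + C + s) * (B - C + s)) / ((A + s) * (B + s)) := by
    intro s
    have e1 : 1 + C / (A + s) = (A + C + s) / (A + s) := by
      rw [eq_div_iff (hA0 s), add_mul, one_mul, div_mul_cancel₀ _ (hA0 s)]
      ring
    have e2 : 1 - C / (B + s) = (B - C + s) / (B + s) := by
      rw [eq_div_iff (hB0 s), sub_mul, one_mul, div_mul_cancel₀ _ (hB0 s)]
      ring
    show (1 + C / (A + s)) * (1 - C / (B + s)) = _
    rw [e1, e2, div_mul_div_comm]
  have hfne : ∀ s : ℕ, f s ≠ 0 := fun s => by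
    rw [hfeq]
    exact div_ne_zero (mul_ne_zero (hAC0 s) (hBC0 s)) (mul_ne_zero (hA0 s) (hB0 s))
  have hg : ∀ s : ℕ, f s - 1 = C * (B - A - C) / ((A + s) * (B + s)) := by
    intro s
    rw [hfeq, div_sub_one (mul_ne_zero (hA0 s) (hB0 s))]
    congr 1
    ring
  -- tendsto of s/(z+s) to 1
  have hinv : Tendsto (fun s : ℕ => ((s : ℂ))⁻¹) atTop (𝓝 0) := by
    rw [tendsto_zero_iff_norm_tendsto_zero]
    simpa using tendsto_one_div_atTop_nhds_zero_nat (𝕜 := ℝ)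
  have hratio : ∀ z : ℂ, Tendsto (fun s : ℕ => (s : ℂ) / (z + s)) atTop (𝓝 1) := by
    intro z
    have h1 : Tendsto (fun s : ℕ => (z * (s : ℂ)⁻¹ + 1)⁻¹) atTop (𝓝 1) := by
      have := ((hinv.const_mul z).add (tendsto_const_nhds (x := (1 : ℂ)))).inv₀ (by norm_num)
      simpa using this
    refine h1.congr' ?_
    filter_upwards [eventually_ge_atTop 1] with s hs
    have hs0 : (s : ℂ) ≠ 0 := Nat.cast_ne_zero.mpr (by omega)
    rw [show z * (s : ℂ)⁻¹ + 1 = (z + s) / s by field_simp, inv_div]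
  have hT : Tendsto (fun s : ℕ => (f s - 1) * (s : ℂ) ^ 2) atTop (𝓝 (C * (B - A - C))) := by
    have h := ((hratio A).mul (hratio B)).const_mul (C * (B - A - C))
    rw [mul_one, mul_one] at h
    refine h.congr fun s => ?_
    rw [hg s, div_mul_div_comm]
    field_simp
  have hO : (fun s : ℕ => f s - 1) =O[atTop] (fun s : ℕ => 1 / (s : ℝ) ^ 2) := by
    have h1 := hT.isBigO_one ℝ
    have h2 : (fun s : ℕ => ((s : ℂ) ^ 2)⁻¹) =O[atTop] (fun s : ℕ => 1 / (s : ℝ) ^ 2) := by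
      refine IsBigO.of_bound 1 ?_
      filter_upwards with s
      rw [norm_inv, norm_pow, Complex.norm_natCast, one_mul, Real.norm_eq_abs,
        _root_.abs_of_nonneg (by positivity), one_div]
    have h3 := h1.mul h2
    refine h3.congr' ?_ ?_
    · filter_upwards [eventually_ge_atTop 1] with s hs
      have hs0 : (s : ℂ) ≠ 0 := Nat.cast_ne_zero.mpr (by omega)
      field_simp
    · filter_upwards with s
      simp
  have h0 : Tendsto (fun s : ℕ => f s - 1) atTop (𝓝 0) := by
    refine hO.trans_tendsto ?_
    simpa [Function.comp_def] using (tendsto_one_div_atTop_nhds_zero_nat (𝕜 := ℝ)).comp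
      (tendsto_pow_atTop (n := 2) two_ne_zero |>.comp tendsto_natCast_atTop_atTop)
  have hlogO : (fun s : ℕ => Complex.log (f s)) =O[atTop] (fun s : ℕ => 1 / (s : ℝ) ^ 2) := by
    refine IsBigO.trans ?_ hO
    refine IsBigO.of_bound (3 / 2) ?_
    have hev : ∀ᶠ s in atTop, ‖f s - 1‖ ≤ 1 / 2 := by
      have := h0.norm
      rw [norm_zero] at this
      exact this.eventually_le_const (by norm_num)
    filter_upwards [hev] with s hs
    have := Complex.norm_log_one_add_half_le_self hs
    simp only [add_sub_cancel] at this
    simpa using this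
  have hsum : Summable (fun s : ℕ => Complex.log (f s)) :=
    summable_of_isBigO_nat (Real.summable_one_div_nat_pow.mpr one_lt_two) hlogO
  have hmul : Multipliable f :=
    Complex.multipliable_of_summable_log hsum
  -- the Gamma sequence ratio
  have hGne : Complex.Gamma (A + C) * Complex.Gamma (B - C) ≠ 0 :=
    mul_ne_zero (Complex.Gamma_ne_zero hAC) (Complex.Gamma_ne_zero hBC)
  have hseq : Tendsto (fun n : ℕ => GammaSeq A n * GammaSeq B n /
      (GammaSeq (A + C) n * GammaSeq (B - C) n)) atTop
      (𝓝 (Complex.Gamma A * Complex.Gamma B /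
        (Complex.Gamma (A + C) * Complex.Gamma (B - C)))) :=
    ((GammaSeq_tendsto_Gamma A).mul (GammaSeq_tendsto_Gamma B)).div
      ((GammaSeq_tendsto_Gamma (A + C)).mul (GammaSeq_tendsto_Gamma (B - C))) hGne
  have heq : ∀ᶠ n : ℕ in atTop, GammaSeq A n * GammaSeq B n /
      (GammaSeq (A + C) n * GammaSeq (B - C) n) = ∏ s ∈ range (n + 1), f s := by
    filter_upwards [eventually_ge_atTop 1] with n hn
    have hn0 : (n : ℂ) ≠ 0 := Nat.cast_ne_zero.mpr (by omega)
    have hPA : (∏ j ∈ range (n + 1), (A + (j : ℂ))) ≠ 0 :=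
      Finset.prod_ne_zero_iff.mpr fun j _ => hA0 j
    have hPB : (∏ j ∈ range (n + 1), (B + (j : ℂ))) ≠ 0 :=
      Finset.prod_ne_zero_iff.mpr fun j _ => hB0 j
    have hPAC : (∏ j ∈ range (n + 1), (A + C + (j : ℂ))) ≠ 0 :=
      Finset.prod_ne_zero_iff.mpr fun j _ => hAC0 j
    have hPBC : (∏ j ∈ range (n + 1), (B - C + (j : ℂ))) ≠ 0 :=
      Finset.prod_ne_zero_iff.mpr fun j _ => hBC0 j
    have hfact : ((Nat.factorial n : ℂ)) ≠ 0 := Nat.cast_ne_zero.mpr n.factorial_ne_zero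
    have hcA : (n : ℂ) ^ A ≠ 0 := by
      rw [Complex.cpow_def_of_ne_zero hn0]; exact Complex.exp_ne_zero _
    have hcB : (n : ℂ) ^ B ≠ 0 := by
      rw [Complex.cpow_def_of_ne_zero hn0]; exact Complex.exp_ne_zero _
    have hcC : (n : ℂ) ^ C ≠ 0 := by
      rw [Complex.cpow_def_of_ne_zero hn0]; exact Complex.exp_ne_zero _
    have hcAC : (n : ℂ) ^ (A + C) ≠ 0 := by
      rw [Complex.cpow_def_of_ne_zero hn0]; exact Complex.exp_ne_zero _
    have hcBC : (n : ℂ) ^ (B - C) ≠ 0 := by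
      rw [Complex.cpow_def_of_ne_zero hn0]; exact Complex.exp_ne_zero _
    have hXY : (n : ℂ) ^ A * (n.factorial : ℂ) * ((n : ℂ) ^ B * (n.factorial : ℂ))
        = (n : ℂ) ^ (A + C) * (n.factorial : ℂ) * ((n : ℂ) ^ (B - C) * (n.factorial : ℂ)) := by
      rw [cpow_add _ _ hn0, cpow_sub _ _ hn0]
      field_simp
    have hX : (n : ℂ) ^ (A + C) * (n.factorial : ℂ) * ((n : ℂ) ^ (B - C) * (n.factorial : ℂ)) ≠ 0 :=
      mul_ne_zero (mul_ne_zero hcAC hfact) (mul_ne_zero hcBC hfact)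
    rw [Finset.prod_congr rfl fun s _ => hfeq s, Finset.prod_div_distrib,
      Finset.prod_mul_distrib, Finset.prod_mul_distrib]
    simp only [GammaSeq]
    rw [div_mul_div_comm, div_mul_div_comm, div_div_div_comm, hXY, div_self hX, one_div, inv_div]
  have h2 : Tendsto (fun n : ℕ => ∏ s ∈ range (n + 1), f s) atTop
      (𝓝 (Complex.Gamma A * Complex.Gamma B /
        (Complex.Gamma (A + C) * Complex.Gamma (B - C)))) := hseq.congr' heq
  have h3 : Tendsto (fun n : ℕ => ∏ s ∈ range (n + 1), f s) atTop (𝓝 (∏' s, f s)) :=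
    hmul.hasProd.tendsto_prod_nat.comp (tendsto_add_atTop_nat 1)
  exact tendsto_nhds_unique h2 h3
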